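/- Let X be a completely metrizable space of weight ℵ_n for some natural number n ≥ 1. Then X can be partitioned into exactly ℵ_n Polish subspaces, and every partition (indeed every covering) of X by Polish subspaces has cardinality at least ℵ_n. -/

import Mathlib

open Cardinal Set TopologicalSpace Ordinal

/-- The weight of a topological space: the least cardinality of a basis. -/
noncomputable def tweight (X : Type*) [TopologicalSpace X] : Cardinal :=
  sInf { c | ∃ B : Set (Set X), IsTopologicalBasis B ∧ #B = c }

theorem isGδ_pre {X Y : Type*} [TopologicalSpace X] [TopologicalSpace Y] {f : Y → X}
    (hf : Continuous f) {s : Set X} (hs : IsGδ s) : IsGδ (f ⁻¹' s) := by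
  obtain ⟨T, hTo, hTc, rfl⟩ := hs
  rw [preimage_sInter]
  exact .biInter_of_isOpen hTc fun t ht => (hTo t ht).preimage hf

theorem gdelta_polish {α : Type*} [TopologicalSpace α] [PolishSpace α] [T2Space α] {s : Set α}
    (hs : IsGδ s) : PolishSpace s := by
  obtain ⟨T, hTo, hTc, rfl⟩ := hs
  rcases T.eq_empty_or_nonempty with rfl | hne
  · rw [sInter_empty]; exact inferInstanceAs (PolishSpace (univ : Set α))
  obtain ⟨U, rfl⟩ := hTc.exists_eq_range hne
  rw [sInter_range]
  haveI : ∀ n, PolishSpace (U n) := fun n => (hTo (U n) (mem_range_self n)).polishSpace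
  set s : Set α := ⋂ n, U n with hs
  have hsub : ∀ (x : s) (n : ℕ), (x : α) ∈ U n := fun x n => (mem_iInter.1 x.2) n
  let f : s → (∀ n : ℕ, U n) := fun x n => ⟨x, hsub x n⟩
  have hfc : Continuous f := continuous_pi fun n => Continuous.subtype_mk continuous_subtype_val _
  have hind : Topology.IsInducing f := by
    have : Topology.IsInducing ((fun g : ∀ n : ℕ, U n => (g 0 : α)) ∘ f) :=
      Topology.IsInducing.subtypeVal
    exact Topology.IsInducing.of_comp hfc ((continuous_apply 0).subtype_val) this
  have hcr : IsClosed (range f) := by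
    have : range f = ⋂ n, {g : ∀ n : ℕ, U n | (g n : α) = (g 0 : α)} := by
      apply Subset.antisymm
      · rintro _ ⟨x, rfl⟩; simp [f]
      · rintro g hg
        simp only [mem_iInter, mem_setOf_eq] at hg
        have hg0 : (g 0 : α) ∈ s := mem_iInter.2 fun n => hg n ▸ (g n).2
        exact ⟨⟨(g 0 : α), hg0⟩, funext fun n => Subtype.ext (hg n).symm⟩
    rw [this]
    exact isClosed_iInter fun n => isClosed_eq ((continuous_apply n).subtype_val)
      ((continuous_apply 0).subtype_val)
  have hemb : Topology.IsClosedEmbedding f :=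
    ⟨⟨hind, fun x y hxy => Subtype.ext (congrArg (fun g => (g 0 : α)) hxy)⟩, hcr⟩
  exact hemb.polishSpace

theorem polish_of_gdelta_sep {X : Type*} [MetricSpace X] [CompleteSpace X] {s : Set X}
    (h1 : IsGδ s) (h2 : IsSeparable s) : PolishSpace s := by
  set K : Set X := closure s with hK
  haveI : CompleteSpace K := isClosed_closure.completeSpace_coe
  haveI : SeparableSpace K := (h2.closure).separableSpace
  haveI : PolishSpace K := inferInstance
  set s' : Set K := Subtype.val ⁻¹' s with hs'
  haveI : PolishSpace s' := gdelta_polish (isGδ_pre continuous_subtype_val h1)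
  let e : s' ≃ₜ s :=
    { toFun := fun x => ⟨x.1.1, x.2⟩
      invFun := fun y => ⟨⟨y.1, subset_closure y.2⟩, y.2⟩
      left_inv := fun x => rfl
      right_inv := fun y => rfl
      continuous_toFun := Continuous.subtype_mk (continuous_subtype_val.comp continuous_subtype_val) _
      continuous_invFun := Continuous.subtype_mk (Continuous.subtype_mk continuous_subtype_val _) _ }
  exact e.symm.isClosedEmbedding.polishSpace

theorem tweight_le_dense {X : Type} [MetricSpace X] {D : Set X} (hD : Dense D) :
    tweight X ≤ #D * ℵ₀ := by
  classical
  set B : Set (Set X) := range (fun p : D × ℕ => Metric.ball (p.1 : X) (1/(p.2+1))) with hB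
  have hbasis : IsTopologicalBasis B := by
    apply isTopologicalBasis_of_isOpen_of_nhds
    · rintro u ⟨p, rfl⟩; exact Metric.isOpen_ball
    · intro a u hau hu
      obtain ⟨ε, hε, hball⟩ := Metric.isOpen_iff.1 hu a hau
      obtain ⟨k, hk⟩ := exists_nat_one_div_lt (half_pos hε)
      have hkpos : (0:ℝ) < 1/(k+1) := by positivity
      obtain ⟨d, hd, hdD⟩ := Metric.dense_iff.1 hD a _ hkpos
      refine ⟨Metric.ball d (1/(k+1)), ⟨⟨⟨d, hdD⟩, k⟩, by simp⟩, ?_, ?_⟩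
      · simpa [Metric.mem_ball, dist_comm] using Metric.mem_ball.1 hd
      · intro z hz
        apply hball
        rw [Metric.mem_ball] at *
        have : dist z a ≤ dist z d + dist a d := dist_triangle_right z a d
        have h2 : dist a d < 1/(k+1) := by
          rw [dist_comm]; exact Metric.mem_ball.1 hd
        calc dist z a ≤ dist z d + dist a d := this
          _ < 1/(k+1) + 1/(k+1) := by exact add_lt_add hz h2
          _ < ε/2 + ε/2 := by exact add_lt_add hk hk
          _ = ε := by ring
  have : tweight X ≤ #B := csInf_le' ⟨B, hbasis, rfl⟩
  refine this.trans ?_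
  calc #B ≤ #(D × ℕ) := mk_range_le
    _ = #D * ℵ₀ := by simp
theorem exists_dense_of_basis {X : Type} [TopologicalSpace X] {B : Set (Set X)}
    (hB : IsTopologicalBasis B) : ∃ D : Set X, Dense D ∧ #D ≤ #B := by
  classical
  set S : Set (Set X) := {b ∈ B | b.Nonempty} with hS
  set f : S → X := fun b => b.2.2.some with hf
  refine ⟨range f, ?_, ?_⟩
  · rw [dense_iff_inter_open]
    rintro U hU ⟨x, hx⟩
    obtain ⟨b, hbB, hxb, hbU⟩ := hB.exists_subset_of_mem_open hx hU
    have hbne : b.Nonempty := ⟨x, hxb⟩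
    exact ⟨f ⟨b, hbB, hbne⟩, hbU hbne.some_mem, mem_range_self _⟩
  · exact mk_range_le.trans (mk_le_mk_of_subset (sep_subset _ _))

theorem iic_card (n : ℕ) (i : (aleph ((n:Ordinal)+1)).ord.ToType) : #(Iic i) ≤ aleph n := by
  have h1 : #(Iio i) < aleph ((n:Ordinal)+1) := mk_Iio_ord_toType i
  have h2 : #(Iic i) < aleph ((n:Ordinal)+1) := by
    rw [← Set.Iio_insert]
    refine lt_of_le_of_lt Cardinal.mk_insert_le ?_
    exact Cardinal.add_lt_of_lt (aleph0_le_aleph _) h1 (one_lt_aleph0.trans_le (aleph0_le_aleph _))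
  have he : aleph ((n:Ordinal)+1) = Order.succ (aleph n) := by
    rw [Ordinal.add_one_eq_succ, aleph_succ]
  exact Order.lt_succ_iff.mp (lt_of_lt_of_le h2 he.le)

theorem bdd_of_small (n : ℕ) (S : Set ((aleph ((n:Ordinal)+1)).ord.ToType))
    (hS : #S ≤ aleph n) : ∃ i, ∀ j ∈ S, j ≤ i := by
  have hne : Nonempty ((aleph ((n:Ordinal)+1)).ord.ToType) := by
    rw [← mk_ne_zero_iff, mk_toType, card_ord]
    exact (aleph_pos _).ne'
  rcases S.eq_empty_or_nonempty with rfl | hSne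
  · exact ⟨hne.some, by simp⟩
  by_contra hcon
  push_neg at hcon
  have hcover : (univ : Set ((aleph ((n:Ordinal)+1)).ord.ToType)) ⊆ ⋃ j ∈ S, Iic j := by
    intro x _
    obtain ⟨j, hj, hxj⟩ := hcon x
    exact mem_biUnion hj (hxj.le)
  have hcard : aleph ((n:Ordinal)+1) ≤ #(⋃ j ∈ S, Iic j) := by
    calc aleph ((n:Ordinal)+1) = #((aleph ((n:Ordinal)+1)).ord.ToType) := by
          rw [mk_toType, card_ord]
      _ = #(univ : Set ((aleph ((n:Ordinal)+1)).ord.ToType)) := mk_univ.symm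
      _ ≤ _ := mk_le_mk_of_subset hcover
  have hle : #(⋃ j ∈ S, Iic j) ≤ aleph n := by
    haveI : Nonempty S := hSne.to_subtype
    refine le_trans (Cardinal.mk_biUnion_le _ _) ?_
    refine le_trans (mul_le_mul' hS (ciSup_le' fun j => iic_card n j.1)) ?_
    rw [Cardinal.mul_eq_self (aleph0_le_aleph _)]
  have := hcard.trans hle
  exact absurd this (not_le.mpr (aleph_lt_aleph.2 (by exact lt_add_one _)))

theorem main_partition {X : Type} [MetricSpace X] [CompleteSpace X] (n : ℕ) :
    ∀ (A : Set X), IsGδ A → (∃ D : Set X, #D ≤ aleph n ∧ A ⊆ closure D) →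
    ∃ P : Set (Set X), P.PairwiseDisjoint id ∧ ⋃₀ P = A ∧ (∀ p ∈ P, p.Nonempty) ∧
      (∀ p ∈ P, PolishSpace p) ∧ #P ≤ aleph n := by
  induction n with
  | zero =>
    rintro A hGδ ⟨D, hD, hDA⟩
    rcases A.eq_empty_or_nonempty with rfl | hA
    · exact ⟨∅, by simp, by simp, by simp, by simp, by simp⟩
    · have hsep : IsSeparable A := by
        refine ⟨D, ?_, hDA⟩
        rw [← le_aleph0_iff_set_countable]
        simpa [aleph_zero] using hD
      haveI : PolishSpace A := polish_of_gdelta_sep hGδ hsep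
      refine ⟨{A}, pairwiseDisjoint_singleton _ _, sUnion_singleton _, ?_, ?_, ?_⟩
      · simpa using hA
      · intro p hp; rw [mem_singleton_iff] at hp; subst hp; infer_instance
      · rw [mk_singleton]
        exact le_trans one_lt_aleph0.le (by simp [aleph_zero])
  | succ n ih =>
    rintro A hGδ ⟨D, hD, hDA⟩
    have hcast : (aleph ((n+1 : ℕ) : Ordinal)) = aleph ((n:Ordinal)+1) := by
      norm_cast
    rw [hcast] at hD ⊢
    rcases A.eq_empty_or_nonempty with rfl | hA
    · exact ⟨∅, by simp, by simp, by simp, by simp, by simp⟩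
    rcases D.eq_empty_or_nonempty with rfl | hDne
    · rw [closure_empty, subset_empty_iff] at hDA
      exact absurd hDA hA.ne_empty
    set ι := (aleph ((n:Ordinal)+1)).ord.ToType with hι
    have hmkι : #ι = aleph ((n:Ordinal)+1) := by rw [mk_toType, card_ord]
    haveI hιne : Nonempty ι := by
      rw [← mk_ne_zero_iff, hmkι]; exact (aleph_pos _).ne'
    -- enumeration of D
    obtain ⟨g⟩ : Nonempty (D ↪ ι) := by
      rw [← Cardinal.le_def, hmkι]; exact hD
    haveI : Nonempty D := hDne.to_subtype
    set d : ι → X := fun i => (Function.invFun g i : D) with hd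
    have hrange : range d = D := by
      apply Subset.antisymm
      · rintro _ ⟨i, rfl⟩; exact (Function.invFun g i).2
      · intro x hx
        obtain ⟨i, hi⟩ := Function.invFun_surjective g.injective ⟨x, hx⟩
        exact ⟨i, congrArg Subtype.val hi⟩
    set C : ι → Set X := fun i => closure (d '' Iic i) with hC
    have hCcl : ∀ i, IsClosed (C i) := fun i => isClosed_closure
    have hCmono : ∀ {i j : ι}, i ≤ j → C i ⊆ C j := fun {i j} h =>
      closure_mono (image_mono (Iic_subset_Iic.2 h))
    set U : ι → Set X := fun i => ⋃ j ∈ Iio i, C j with hUdef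
    set L : ι → Set X := fun i => (A ∩ C i) \ U i with hL
    -- covering
    have hcov : ∀ x ∈ A, ∃ i, x ∈ C i := by
      intro x hx
      have hxc : x ∈ closure (range d) := by rw [hrange]; exact hDA hx
      obtain ⟨u, hu, hulim⟩ := mem_closure_iff_seq_limit.1 hxc
      choose j hj using hu
      obtain ⟨i, hi⟩ := bdd_of_small n (range j)
        (le_trans mk_range_le (by simpa using aleph0_le_aleph (n:Ordinal)))
      refine ⟨i, mem_closure_of_tendsto hulim (Filter.Eventually.of_forall fun k => ?_)⟩
      exact ⟨j k, hi _ (mem_range_self k), hj k⟩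
    -- Gδ of C i \ U i
    have hCU : ∀ i, IsGδ (C i \ U i) := by
      intro i
      by_cases hcof : ∃ T : Set ι, T.Countable ∧ T ⊆ Iio i ∧ ∀ j ∈ Iio i, ∃ t ∈ T, j ≤ t
      · obtain ⟨T, hTc, hTsub, hTcof⟩ := hcof
        have hUeq : U i = ⋃ t ∈ T, C t := by
          apply Subset.antisymm
          · refine iUnion₂_subset fun j hj => ?_
            obtain ⟨t, ht, hjt⟩ := hTcof j hj
            exact (hCmono hjt).trans (subset_biUnion_of_mem ht)
          · exact iUnion₂_subset fun t ht => subset_biUnion_of_mem (hTsub ht)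
        rw [diff_eq, hUeq, compl_iUnion₂]
        refine IsGδ.inter (hCcl i).isGδ ?_
        refine IsGδ.biInter hTc fun t ht => ?_
        exact ((hCcl t).isOpen_compl).isGδ
      · push_neg at hcof
        have hUclosed : IsClosed (U i) := by
          refine isClosed_of_closure_subset ?_
          intro x hx
          obtain ⟨u, hu, hulim⟩ := mem_closure_iff_seq_limit.1 hx
          have hu' : ∀ k, ∃ jk ∈ Iio i, u k ∈ C jk := by
            intro k; simpa [hUdef, mem_iUnion] using hu k
          choose jf hjf1 hjf2 using hu'
          obtain ⟨js, hjsi, hjs⟩ := hcof (range jf) (countable_range _)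
            (range_subset_iff.2 hjf1)
          have hjle : ∀ k, jf k ≤ js := fun k => (hjs _ (mem_range_self k)).le
          have hxC : x ∈ C js := by
            have : x ∈ closure (C js) :=
              mem_closure_of_tendsto hulim
                (Filter.Eventually.of_forall fun k => hCmono (hjle k) (hjf2 k))
            rwa [(hCcl js).closure_eq] at this
          exact mem_biUnion hjsi hxC
        rw [diff_eq]
        exact IsGδ.inter (hCcl i).isGδ hUclosed.isOpen_compl.isGδ
    have hLGδ : ∀ i, IsGδ (L i) := by
      intro i
      have : L i = A ∩ (C i \ U i) := inter_diff_assoc A (C i) (U i)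
      rw [this]
      exact hGδ.inter (hCU i)
    -- disjointness of layers
    have hLsub : ∀ i, L i ⊆ A := fun i x hx => hx.1.1
    have hLdisj : ∀ i j : ι, i ≠ j → Disjoint (L i) (L j) := by
      have key : ∀ i j : ι, i < j → Disjoint (L i) (L j) := by
        intro i j hij
        rw [disjoint_left]
        intro x hxi hxj
        exact hxj.2 (mem_biUnion hij hxi.1.2)
      intro i j hij
      rcases hij.lt_or_gt with h | h
      · exact key i j h
      · exact (key j i h).symm
    -- layers cover A
    have hLcover : ⋃ i, L i = A := by
      apply Subset.antisymm
      · exact iUnion_subset hLsub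
      · intro x hx
        have hSne : {i | x ∈ C i}.Nonempty := hcov x hx
        have hwf : WellFoundedLT ι := inferInstance
        set i₀ := hwf.wf.min _ hSne with hi₀
        have hmem : x ∈ C i₀ := hwf.wf.min_mem _ hSne
        have hnotU : x ∉ U i₀ := by
          intro hxu
          obtain ⟨j, hj, hxj⟩ := mem_iUnion₂.1 hxu
          exact hwf.wf.not_lt_min _ hxj hj
        exact mem_iUnion.2 ⟨i₀, ⟨hx, hmem⟩, hnotU⟩
    -- apply induction hypothesis to the layers
    have hIH : ∀ i, ∃ P : Set (Set X), P.PairwiseDisjoint id ∧ ⋃₀ P = L i ∧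
        (∀ p ∈ P, p.Nonempty) ∧ (∀ p ∈ P, PolishSpace p) ∧ #P ≤ aleph n := by
      intro i
      refine ih (L i) (hLGδ i) ⟨d '' Iic i, ?_, fun x hx => hx.1.2⟩
      exact le_trans mk_image_le (iic_card n i)
    choose Q hQdisj hQun hQne hQpol hQcard using hIH
    have hQsub : ∀ i, ∀ p ∈ Q i, p ⊆ L i := fun i p hp =>
      (hQun i) ▸ subset_sUnion_of_mem hp
    refine ⟨⋃ i, Q i, ?_, ?_, ?_, ?_, ?_⟩
    · intro p hp q hq hpq
      obtain ⟨i, hpi⟩ := mem_iUnion.1 hp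
      obtain ⟨j, hqj⟩ := mem_iUnion.1 hq
      rcases eq_or_ne i j with rfl | hij
      · exact hQdisj i hpi hqj hpq
      · exact ((hLdisj i j hij).mono (hQsub i p hpi) (hQsub j q hqj))
    · rw [sUnion_iUnion]
      rw [iUnion_congr hQun]
      exact hLcover
    · intro p hp
      obtain ⟨i, hpi⟩ := mem_iUnion.1 hp
      exact hQne i p hpi
    · intro p hp
      obtain ⟨i, hpi⟩ := mem_iUnion.1 hp
      exact hQpol i p hpi
    · refine le_trans (mk_iUnion_le _) ?_
      have h1 : ⨆ i, #(Q i) ≤ aleph n := ciSup_le' hQcard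
      refine le_trans (mul_le_mul' hmkι.le h1) ?_
      rw [Cardinal.mul_eq_max (aleph0_le_aleph _) (aleph0_le_aleph _)]
      exact max_le le_rfl (aleph_le_aleph.2 le_self_add)

/-- A completely metrizable space of weight `ℵ_n` (`n ≥ 1`) can be partitioned into
exactly `ℵ_n` Polish subspaces, and every covering of it by Polish subspaces has
cardinality at least `ℵ_n`. -/
theorem partition_cover_aleph_n (n : ℕ) (hn : 1 ≤ n) (X : Type) [MetricSpace X]
    [CompleteSpace X] (hw : tweight X = Cardinal.aleph n) :
    (∃ P : Set (Set X), P.PairwiseDisjoint id ∧ ⋃₀ P = Set.univ ∧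
      (∀ Y ∈ P, PolishSpace Y) ∧ #P = Cardinal.aleph n) ∧
    (∀ F : Set (Set X), (∀ Y ∈ F, PolishSpace Y) → ⋃₀ F = Set.univ →
      Cardinal.aleph n ≤ #F) := by
  have haleph0lt : ℵ₀ < aleph n := by
    rw [← aleph_zero]
    exact aleph_lt_aleph.2 (by exact_mod_cast Nat.pos_of_ne_zero (by omega))
  -- lower bound part
  have hlow : ∀ F : Set (Set X), (∀ Y ∈ F, PolishSpace Y) → ⋃₀ F = Set.univ →
      Cardinal.aleph n ≤ #F := by
    intro F hF hFU
    have hsep : ∀ Y ∈ F, ∃ DY : Set X, DY.Countable ∧ Y ⊆ closure DY := by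
      intro Y hY
      haveI := hF Y hY
      haveI : SeparableSpace Y := inferInstance
      exact IsSeparable.of_subtype Y
    choose! DY hDc hDsub using hsep
    set D : Set X := ⋃ Y ∈ F, DY Y with hDdef
    have hDdense : Dense D := by
      intro x
      have hx : x ∈ ⋃₀ F := hFU ▸ mem_univ x
      obtain ⟨Y, hY, hxY⟩ := hx
      exact closure_mono (subset_biUnion_of_mem hY) (hDsub Y hY hxY)
    have hFne : F.Nonempty := by
      rcases F.eq_empty_or_nonempty with rfl | h
      · exfalso
        have h1a : tweight X ≤ #{U : Set X | IsOpen U} :=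
          csInf_le' ⟨{U : Set X | IsOpen U}, isTopologicalBasis_opens, rfl⟩
        have h1 : tweight X ≤ 2 ^ #X := h1a.trans (by rw [← mk_set]; exact mk_set_le _)
        have hXe : IsEmpty X := by
          rw [sUnion_empty] at hFU
          constructor
          intro x
          have hx : x ∈ (∅ : Set X) := hFU.symm ▸ mem_univ x
          simp at hx
        have : #X = 0 := mk_eq_zero X
        rw [this] at h1
        rw [hw] at h1
        simp only [power_zero] at h1
        exact absurd (h1.trans_lt (lt_of_lt_of_le one_lt_aleph0 haleph0lt.le)) (lt_irrefl _)
      · exact h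
    haveI : Nonempty F := hFne.to_subtype
    have h3 : #D ≤ #F * ℵ₀ := by
      refine le_trans (mk_biUnion_le DY F) ?_
      exact mul_le_mul' le_rfl (ciSup_le' fun Y =>
        le_aleph0_iff_set_countable.2 (hDc Y Y.2))
    have h4 : aleph n ≤ #D * ℵ₀ := hw ▸ tweight_le_dense hDdense
    have h5 : aleph n ≤ max #F ℵ₀ := by
      refine h4.trans ?_
      calc #D * ℵ₀ ≤ (#F * ℵ₀) * ℵ₀ := mul_le_mul' h3 le_rfl
        _ ≤ max (max (#F * ℵ₀) ℵ₀) ℵ₀ := mul_le_max _ _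
        _ ≤ max (max (max (max #F ℵ₀) ℵ₀) ℵ₀) ℵ₀ := by
            refine max_le_max (max_le_max (mul_le_max _ _) le_rfl) le_rfl
        _ = max #F ℵ₀ := by simp [max_assoc]
    rcases le_max_iff.1 h5 with h | h
    · exact h
    · exact absurd h (not_le.2 haleph0lt)
  refine ⟨?_, hlow⟩
  -- upper bound / construction part
  have hset : {c | ∃ B : Set (Set X), IsTopologicalBasis B ∧ #B = c}.Nonempty :=
    ⟨#{U : Set X | IsOpen U}, {U : Set X | IsOpen U}, isTopologicalBasis_opens, rfl⟩
  obtain ⟨B, hB, hBcard⟩ := csInf_mem hset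
  obtain ⟨D, hDdense, hDcard⟩ := exists_dense_of_basis hB
  have hDle : #D ≤ aleph n := by
    rw [← hw]
    exact hDcard.trans_eq hBcard
  obtain ⟨P, hPd, hPu, hPne, hPpol, hPcard⟩ := main_partition (X := X) n univ IsGδ.univ
    ⟨D, hDle, by rw [hDdense.closure_eq]⟩
  exact ⟨P, hPd, hPu, hPpol, le_antisymm hPcard (hlow P hPpol hPu)⟩
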